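/- arXiv:2403.03040 — 3 statements merged into one kernel-verified Lean document; each statement's English description precedes it below -/
import Mathlib

section
/- There exists a constant C < ∞ such that for all t > 0 and all z ∈ ℂ, the planar Brownian bridge from z to z of duration t satisfies E^{t,z,z}[ Area(Fill(p([0,t])))² ] ≤ C t², where for a compact set K ⊂ ℂ, Fill(K) denotes the complement of the unbounded connected component of ℂ ∖ K and Area denotes two-dimensional Lebesgue measure. -/
open MeasureTheory ProbabilityTheory Filter Set

open scoped ENNReal NNReal

noncomputable section

/-- A standard planar Brownian motion started at `0`. -/
structure IsPlanarBM {Ω : Type*} [MeasurableSpace Ω] (P : Measure Ω)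
    (B : ℝ → Ω → ℂ) : Prop where
  meas : ∀ t : ℝ, Measurable (B t)
  start : ∀ ω, B 0 ω = 0
  cont : ∀ ω, Continuous fun t => B t ω
  indep : ∀ (n : ℕ) (t : ℕ → ℝ), Monotone t →
    iIndepFun
      (fun i : Fin n => fun ω => B (t (i + 1)) ω - B (t i) ω) P
  gauss : ∀ s t : ℝ, 0 ≤ s → s ≤ t →
    Measure.map (fun ω => B t ω - B s ω) P =
      Measure.map (fun p : ℝ × ℝ => (p.1 : ℂ) + p.2 * Complex.I)
        ((gaussianReal 0 (Real.toNNReal (t - s))).prod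
          (gaussianReal 0 (Real.toNNReal (t - s))))

/-- The Brownian bridge from `z` to `z` of duration `t` built from `B`:
`p_s = z + B_s - (s / t) B_t`. -/
def bridgePath {Ω : Type*} (B : ℝ → Ω → ℂ) (t : ℝ) (z : ℂ) (ω : Ω) (s : ℝ) : ℂ :=
  z + B s ω - ((s / t : ℝ) : ℂ) * B t ω

/-- The range `p([0,t])` of the Brownian bridge from `z` to `z` of duration `t`. -/
def bridgeImg {Ω : Type*} (B : ℝ → Ω → ℂ) (t : ℝ) (z : ℂ) (ω : Ω) : Set ℂ :=
  bridgePath B t z ω '' Set.Icc 0 t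

/-- `Fill K`: the complement of the unbounded connected component of `ℂ \ K`, i.e. the set of
points whose connected component in `ℂ \ K` is bounded (points of `K` included, since their
component in `ℂ \ K` is empty). -/
def Fill (K : Set ℂ) : Set ℂ :=
  {x : ℂ | Bornology.IsBounded (connectedComponentIn Kᶜ x)}

lemma Fill_subset_closedBall {K : Set ℂ} {z : ℂ} {r : ℝ} (hr : 0 ≤ r)
    (hK : K ⊆ Metric.closedBall z r) : Fill K ⊆ Metric.closedBall z r := by
  intro x hx
  by_contra hx'
  have hxz : r < ‖x - z‖ := by
    simpa [Metric.mem_closedBall, Complex.dist_eq, not_le] using hx'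
  have hxz0 : 0 < ‖x - z‖ := lt_of_le_of_lt hr hxz
  -- the ray from x away from z
  set f : ℝ → ℂ := fun τ => x + (τ : ℂ) * (x - z) with hf
  have hcont : Continuous f := by continuity
  have hray : IsPreconnected (f '' Ici 0) :=
    (isPreconnected_Ici).image f hcont.continuousOn
  have hnorm : ∀ τ : ℝ, 0 ≤ τ → ‖f τ - z‖ = (1 + τ) * ‖x - z‖ := by
    intro τ hτ
    have : f τ - z = ((1 + τ : ℝ) : ℂ) * (x - z) := by
      simp only [hf]; push_cast; ring
    rw [this, norm_mul, Complex.norm_real, Real.norm_eq_abs, abs_of_nonneg (by linarith)]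
  have hsub : f '' Ici 0 ⊆ Kᶜ := by
    rintro _ ⟨τ, hτ, rfl⟩
    intro hmem
    have h := hK hmem
    have h' : ‖f τ - z‖ ≤ r := by rw [Metric.mem_closedBall, dist_eq_norm] at h; exact h
    rw [hnorm τ hτ] at h'
    have hτ' : (0:ℝ) ≤ τ := hτ
    nlinarith [mul_nonneg hτ' hxz0.le]
  have hxmem : x ∈ f '' Ici 0 := ⟨0, Set.mem_Ici.mpr le_rfl, by simp [hf]⟩
  have hsubcomp : f '' Ici 0 ⊆ connectedComponentIn Kᶜ x :=
    hray.subset_connectedComponentIn hxmem hsub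
  have hxB : Bornology.IsBounded (connectedComponentIn Kᶜ x) := hx
  have hbd : Bornology.IsBounded (f '' Ici 0) := hxB.subset hsubcomp
  obtain ⟨C, hC⟩ := isBounded_iff_forall_norm_le.mp hbd
  set τ : ℝ := (C + ‖z‖ + 1) / ‖x - z‖ with hτdef
  have hC0 : 0 ≤ C := le_trans (norm_nonneg x) (hC x hxmem)
  have hτ0 : 0 ≤ τ := by positivity
  have hmem : f τ ∈ f '' Ici 0 := ⟨τ, hτ0, rfl⟩
  have h1 : ‖f τ - z‖ = (1 + τ) * ‖x - z‖ := hnorm τ hτ0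
  have h2 : ‖f τ‖ ≥ ‖f τ - z‖ - ‖z‖ := by
    have := norm_sub_norm_le (f τ - z) (-z)
    simp only [sub_neg_eq_add, sub_add_cancel, norm_neg] at this
    linarith
  have h3 : τ * ‖x - z‖ = C + ‖z‖ + 1 :=
    div_mul_cancel₀ _ (ne_of_gt hxz0)
  have := hC _ hmem
  nlinarith




def gaussMoment4 : ℝ≥0∞ := ∫⁻ x, ENNReal.ofReal (x ^ 4) ∂(gaussianReal 0 1)

lemma gauss_pdf_exp (c x : ℝ) (hc : c ^ 2 = 1) :
    gaussianPDFReal 0 1 x * Real.exp (c * x) = Real.exp 2⁻¹ * gaussianPDFReal c 1 x := by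
  simp only [gaussianPDFReal, NNReal.coe_one, mul_one, sub_zero]
  rw [mul_comm (Real.exp 2⁻¹), mul_assoc, mul_assoc, ← Real.exp_add, ← Real.exp_add]
  congr 1
  rw [Real.exp_eq_exp]
  have : (x - c) ^ 2 = x ^ 2 - 2 * c * x + 1 := by rw [sub_sq]; rw [hc]; ring
  rw [this]; ring

lemma lintegral_exp_gauss (c : ℝ) (hc : c ^ 2 = 1) :
    ∫⁻ x, ENNReal.ofReal (Real.exp (c * x)) ∂(gaussianReal 0 1)
      = ENNReal.ofReal (Real.exp 2⁻¹) := by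
  rw [gaussianReal, if_neg one_ne_zero,
    lintegral_withDensity_eq_lintegral_mul _ (measurable_gaussianPDF 0 1)
      ((measurable_id'.const_mul c).exp.ennreal_ofReal)]
  have : ∀ x : ℝ, (gaussianPDF 0 1 * fun x => ENNReal.ofReal (Real.exp (c * x))) x
      = ENNReal.ofReal (Real.exp 2⁻¹) * gaussianPDF c 1 x := by
    intro x
    simp only [Pi.mul_apply, gaussianPDF]
    rw [← ENNReal.ofReal_mul (gaussianPDFReal_nonneg 0 1 x), gauss_pdf_exp c x hc,
      ENNReal.ofReal_mul (Real.exp_nonneg _)]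
  rw [lintegral_congr this, lintegral_const_mul' _ _ ENNReal.ofReal_ne_top,
    lintegral_gaussianPDF_eq_one c one_ne_zero, mul_one]

lemma pow4_le (x : ℝ) : x ^ 4 ≤ 24 * (Real.exp x + Real.exp (-x)) := by
  have h1 : |x| ^ 4 / 24 ≤ Real.exp |x| := by
    have := Real.sum_le_exp_of_nonneg (abs_nonneg x) 5
    have h2 : |x| ^ 4 / (4:ℕ).factorial ≤ ∑ i ∈ Finset.range 5, |x| ^ i / i.factorial := by
      exact Finset.single_le_sum (f := fun i => |x| ^ i / i.factorial)
        (fun i _ => by positivity) (Finset.mem_range.mpr (by norm_num : (4:ℕ) < 5))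
    simp only [Nat.factorial] at h2
    norm_num at h2
    linarith
  have h3 : Real.exp |x| ≤ Real.exp x + Real.exp (-x) := by
    rcases abs_cases x with ⟨h, _⟩ | ⟨h, _⟩
    · rw [h]; nlinarith [Real.exp_pos (-x)]
    · rw [h]; nlinarith [Real.exp_pos x]
  have h4 : x ^ 4 = |x| ^ 4 := by rw [← abs_pow, abs_of_nonneg (by positivity)]
  nlinarith

lemma gaussMoment4_ne_top : gaussMoment4 ≠ ⊤ := by
  have hm : ∀ c : ℝ, Measurable fun x : ℝ => ENNReal.ofReal (Real.exp (c * x)) :=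
    fun c => ((measurable_id'.const_mul c).exp).ennreal_ofReal
  have hb : ∀ x : ℝ, ENNReal.ofReal (x ^ 4)
      ≤ ENNReal.ofReal 24 * ENNReal.ofReal (Real.exp (1 * x))
        + ENNReal.ofReal 24 * ENNReal.ofReal (Real.exp ((-1) * x)) := by
    intro x
    rw [← ENNReal.ofReal_mul (by norm_num), ← ENNReal.ofReal_mul (by norm_num),
      ← ENNReal.ofReal_add (by positivity) (by positivity)]
    refine ENNReal.ofReal_le_ofReal ?_
    have := pow4_le x
    rw [one_mul, neg_one_mul]
    linarith
  have h : gaussMoment4 ≤ ∫⁻ x, (ENNReal.ofReal 24 * ENNReal.ofReal (Real.exp (1 * x))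
      + ENNReal.ofReal 24 * ENNReal.ofReal (Real.exp ((-1) * x))) ∂(gaussianReal 0 1) :=
    lintegral_mono hb
  rw [lintegral_add_left ((hm 1).const_mul _),
    lintegral_const_mul' _ _ ENNReal.ofReal_ne_top,
    lintegral_const_mul' _ _ ENNReal.ofReal_ne_top,
    lintegral_exp_gauss 1 (by norm_num), lintegral_exp_gauss (-1) (by norm_num)] at h
  exact ne_top_of_le_ne_top (by finiteness) h

lemma lintegral_pow4_gauss (v : ℝ≥0) :
    ∫⁻ x, ENNReal.ofReal (x ^ 4) ∂(gaussianReal 0 v) = (v : ℝ≥0∞) ^ 2 * gaussMoment4 := by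
  by_cases hv : v = 0
  · subst hv
    rw [gaussianReal_zero_var, lintegral_dirac' _ (by measurability)]
    simp
  · have hmap := gaussianReal_map_const_mul (μ := 0) (v := 1) (Real.sqrt v)
    have hvv : Measure.map (fun x => Real.sqrt v * x) (gaussianReal 0 1) = gaussianReal 0 v := by
      rw [hmap, mul_zero]; congr 1; apply NNReal.eq; simp [Real.sq_sqrt v.2]
    rw [← hvv, lintegral_map (by measurability) (measurable_const_mul _)]
    have : ∀ x : ℝ, ENNReal.ofReal ((Real.sqrt v * x) ^ 4)
        = ENNReal.ofReal ((v:ℝ)^2) * ENNReal.ofReal (x ^ 4) := by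
      intro x
      rw [← ENNReal.ofReal_mul (by positivity)]
      congr 1
      have h2 : Real.sqrt (v:ℝ) ^ 2 = (v:ℝ) := Real.sq_sqrt v.2
      calc (Real.sqrt v * x) ^ 4 = (Real.sqrt (v:ℝ) ^ 2) ^ 2 * x ^ 4 := by ring
        _ = (v:ℝ) ^ 2 * x ^ 4 := by rw [h2]
    rw [lintegral_congr this, lintegral_const_mul' _ _ ENNReal.ofReal_ne_top]
    congr 1
    norm_cast
    exact ENNReal.ofReal_coe_nnreal



private lemma hnr (x : ℝ≥0∞) : x ^ (4:ℝ) = x ^ (4:ℕ) := by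
  rw [← ENNReal.rpow_natCast]; norm_num

private lemma hinv4 (x : ℝ≥0∞) : (x ^ (4:ℝ)) ^ ((4:ℝ)⁻¹) = x := by
  rw [← ENNReal.rpow_mul]; norm_num

lemma lintegral_tsum_pow4_le {Ω : Type} [MeasurableSpace Ω] (P : Measure Ω)
    (f : ℕ → Ω → ℝ≥0∞) (hf : ∀ n, Measurable (f n)) (b : ℕ → ℝ≥0∞)
    (hb : ∀ n, ∫⁻ ω, (f n ω) ^ (4:ℕ) ∂P ≤ (b n) ^ (4:ℕ)) :
    ∫⁻ ω, (∑' n, f n ω) ^ (4:ℕ) ∂P ≤ (∑' n, b n) ^ (4:ℕ) := by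
  set S : ℕ → Ω → ℝ≥0∞ := fun N ω => ∑ n ∈ Finset.range N, f n ω with hS
  have hSmeas : ∀ N, Measurable (S N) := fun N =>
    Finset.measurable_sum _ (fun n _ => hf n)
  have key : ∀ N, (∫⁻ ω, (S N ω) ^ (4:ℕ) ∂P) ^ ((4:ℝ)⁻¹) ≤ ∑ n ∈ Finset.range N, b n := by
    intro N
    induction N with
    | zero =>
        simp only [hS, Finset.range_zero, Finset.sum_empty]
        rw [zero_pow (by norm_num), lintegral_zero, ENNReal.zero_rpow_of_pos (by norm_num)]
    | succ N ih =>
        have hstep := ENNReal.lintegral_Lp_add_le (μ := P) (p := 4)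
          (hSmeas N).aemeasurable (hf N).aemeasurable (by norm_num)
        have hSsucc : S (N + 1) = S N + f N := by
          funext ω
          simp [hS, Finset.sum_range_succ]
        rw [hSsucc]
        have hbn : (∫⁻ ω, (f N ω) ^ (4:ℝ) ∂P) ^ (1/(4:ℝ)) ≤ b N := by
          rw [one_div]
          calc (∫⁻ ω, (f N ω) ^ (4:ℝ) ∂P) ^ ((4:ℝ)⁻¹)
              ≤ ((b N) ^ (4:ℝ)) ^ ((4:ℝ)⁻¹) := by
                refine ENNReal.rpow_le_rpow ?_ (by norm_num)
                simp only [hnr]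
                exact hb N
            _ = b N := hinv4 _
        calc (∫⁻ ω, ((S N + f N) ω) ^ (4:ℕ) ∂P) ^ ((4:ℝ)⁻¹)
            = (∫⁻ ω, ((S N + f N) ω) ^ (4:ℝ) ∂P) ^ (1/(4:ℝ)) := by
              rw [one_div]; congr 1; exact lintegral_congr fun ω => (hnr _).symm
          _ ≤ (∫⁻ ω, (S N ω) ^ (4:ℝ) ∂P) ^ (1/(4:ℝ))
              + (∫⁻ ω, (f N ω) ^ (4:ℝ) ∂P) ^ (1/(4:ℝ)) := hstep
          _ ≤ (∑ n ∈ Finset.range N, b n) + b N := by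
              refine add_le_add ?_ hbn
              rw [one_div]
              calc (∫⁻ ω, (S N ω) ^ (4:ℝ) ∂P) ^ ((4:ℝ)⁻¹)
                  = (∫⁻ ω, (S N ω) ^ (4:ℕ) ∂P) ^ ((4:ℝ)⁻¹) := by
                    congr 1; exact lintegral_congr fun ω => hnr _
                _ ≤ _ := ih
          _ = ∑ n ∈ Finset.range (N + 1), b n := (Finset.sum_range_succ _ _).symm
  have h1 : ∀ ω, (∑' n, f n ω) ^ (4:ℕ) = ⨆ N, (S N ω) ^ (4:ℕ) := by
    intro ω
    rw [ENNReal.tsum_eq_iSup_nat]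
    exact Monotone.map_iSup_of_continuousAt ((ENNReal.continuous_pow 4).continuousAt)
      (fun a b hab => pow_le_pow_left' hab 4) (by simp)
  calc ∫⁻ ω, (∑' n, f n ω) ^ (4:ℕ) ∂P
      = ∫⁻ ω, ⨆ N, (S N ω) ^ (4:ℕ) ∂P := lintegral_congr h1
    _ = ⨆ N, ∫⁻ ω, (S N ω) ^ (4:ℕ) ∂P := by
        refine lintegral_iSup (fun N => (hSmeas N).pow_const 4) ?_
        intro N M hNM ω
        exact pow_le_pow_left' (Finset.sum_le_sum_of_subset
          (Finset.range_subset_range.mpr hNM)) 4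
    _ ≤ (∑' n, b n) ^ (4:ℕ) := by
        refine iSup_le fun N => ?_
        have h2 := ENNReal.rpow_le_rpow (key N) (by norm_num : (0:ℝ) ≤ 4)
        rw [← ENNReal.rpow_mul, inv_mul_cancel₀ (by norm_num : (4:ℝ) ≠ 0),
          ENNReal.rpow_one] at h2
        calc ∫⁻ ω, (S N ω) ^ (4:ℕ) ∂P
            ≤ (∑ n ∈ Finset.range N, b n) ^ (4:ℝ) := h2
          _ = (∑ n ∈ Finset.range N, b n) ^ (4:ℕ) := hnr _
          _ ≤ (∑' n, b n) ^ (4:ℕ) := pow_le_pow_left' (ENNReal.sum_le_tsum _) 4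
lemma lintegral_norm4_increment {Ω : Type} [MeasurableSpace Ω] (P : Measure Ω)
    [IsProbabilityMeasure P] (B : ℝ → Ω → ℂ) (hB : IsPlanarBM P B) {a b : ℝ}
    (ha : 0 ≤ a) (hab : a ≤ b) :
    ∫⁻ ω, (‖B b ω - B a ω‖₊ : ℝ≥0∞) ^ (4:ℕ) ∂P
      ≤ 4 * gaussMoment4 * (ENNReal.ofReal (b - a)) ^ (2:ℕ) := by
  have hmeas : Measurable fun ω => B b ω - B a ω := (hB.meas b).sub (hB.meas a)
  have hι : Measurable fun p : ℝ × ℝ => (p.1 : ℂ) + p.2 * Complex.I :=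
    ((RCLike.measurable_ofReal (𝕜 := ℂ)).comp measurable_fst).add
      (((RCLike.measurable_ofReal (𝕜 := ℂ)).comp measurable_snd).mul_const _)
  have hf4 : Measurable fun w : ℂ => (‖w‖₊ : ℝ≥0∞) ^ (4:ℕ) :=
    measurable_id.nnnorm.coe_nnreal_ennreal.pow_const 4
  set v : ℝ≥0 := Real.toNNReal (b - a) with hv
  have h1 : ∫⁻ ω, (‖B b ω - B a ω‖₊ : ℝ≥0∞) ^ (4:ℕ) ∂P
      = ∫⁻ p : ℝ × ℝ, (‖(p.1 : ℂ) + p.2 * Complex.I‖₊ : ℝ≥0∞) ^ (4:ℕ)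
          ∂((gaussianReal 0 v).prod (gaussianReal 0 v)) := by
    rw [← lintegral_map hf4 hmeas, hB.gauss a b ha hab, lintegral_map hf4 hι]
  have hpt : ∀ p : ℝ × ℝ, (‖(p.1 : ℂ) + p.2 * Complex.I‖₊ : ℝ≥0∞) ^ (4:ℕ)
      ≤ 2 * ENNReal.ofReal (p.1 ^ 4) + 2 * ENNReal.ofReal (p.2 ^ 4) := by
    intro p
    have hw : (‖(p.1 : ℂ) + p.2 * Complex.I‖₊ : ℝ≥0∞) ^ (4:ℕ)
        = ENNReal.ofReal (‖(p.1 : ℂ) + p.2 * Complex.I‖ ^ 4) := by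
      rw [ENNReal.ofReal_pow (norm_nonneg _), ofReal_norm, enorm_eq_nnnorm]
    rw [hw]
    have hnorm : ‖(p.1 : ℂ) + p.2 * Complex.I‖ ^ 4 = (p.1 ^ 2 + p.2 ^ 2) ^ 2 := by
      have h2 : ‖(p.1 : ℂ) + p.2 * Complex.I‖ ^ 2 = p.1 ^ 2 + p.2 ^ 2 := by
        rw [Complex.sq_norm, Complex.normSq_add_mul_I]
      calc ‖(p.1 : ℂ) + p.2 * Complex.I‖ ^ 4
          = (‖(p.1 : ℂ) + p.2 * Complex.I‖ ^ 2) ^ 2 := by ring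
        _ = (p.1 ^ 2 + p.2 ^ 2) ^ 2 := by rw [h2]
    rw [hnorm]
    calc ENNReal.ofReal ((p.1 ^ 2 + p.2 ^ 2) ^ 2)
        ≤ ENNReal.ofReal (2 * p.1 ^ 4 + 2 * p.2 ^ 4) := by
          refine ENNReal.ofReal_le_ofReal ?_; nlinarith [sq_nonneg (p.1^2 - p.2^2)]
      _ = ENNReal.ofReal (2 * p.1 ^ 4) + ENNReal.ofReal (2 * p.2 ^ 4) :=
          ENNReal.ofReal_add (by positivity) (by positivity)
      _ = 2 * ENNReal.ofReal (p.1 ^ 4) + 2 * ENNReal.ofReal (p.2 ^ 4) := by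
          rw [ENNReal.ofReal_mul (by norm_num), ENNReal.ofReal_mul (by norm_num),
            ENNReal.ofReal_ofNat]
  have hm1 : Measurable fun p : ℝ × ℝ => ENNReal.ofReal (p.1 ^ 4) :=
    ((measurable_fst.pow_const 4)).ennreal_ofReal
  have hm2 : Measurable fun p : ℝ × ℝ => ENNReal.ofReal (p.2 ^ 4) :=
    ((measurable_snd.pow_const 4)).ennreal_ofReal
  have hfst : ∫⁻ p : ℝ × ℝ, ENNReal.ofReal (p.1 ^ 4)
      ∂((gaussianReal 0 v).prod (gaussianReal 0 v)) = (v : ℝ≥0∞) ^ 2 * gaussMoment4 := by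
    rw [lintegral_prod _ hm1.aemeasurable]
    simp only [lintegral_const, measure_univ, mul_one]
    exact lintegral_pow4_gauss v
  have hsnd : ∫⁻ p : ℝ × ℝ, ENNReal.ofReal (p.2 ^ 4)
      ∂((gaussianReal 0 v).prod (gaussianReal 0 v)) = (v : ℝ≥0∞) ^ 2 * gaussMoment4 := by
    rw [lintegral_prod _ hm2.aemeasurable]
    have hin : ∀ x : ℝ, ∫⁻ y, ENNReal.ofReal ((x, y).2 ^ 4) ∂(gaussianReal 0 v)
        = (v : ℝ≥0∞) ^ 2 * gaussMoment4 := fun _ => lintegral_pow4_gauss v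
    rw [lintegral_congr hin, lintegral_const, measure_univ, mul_one]
  rw [h1]
  calc ∫⁻ p : ℝ × ℝ, (‖(p.1 : ℂ) + p.2 * Complex.I‖₊ : ℝ≥0∞) ^ (4:ℕ)
        ∂((gaussianReal 0 v).prod (gaussianReal 0 v))
      ≤ ∫⁻ p : ℝ × ℝ, (2 * ENNReal.ofReal (p.1 ^ 4) + 2 * ENNReal.ofReal (p.2 ^ 4))
        ∂((gaussianReal 0 v).prod (gaussianReal 0 v)) := lintegral_mono hpt
    _ = 2 * ((v : ℝ≥0∞) ^ 2 * gaussMoment4) + 2 * ((v : ℝ≥0∞) ^ 2 * gaussMoment4) := by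
        rw [lintegral_add_left (hm1.const_mul _),
          lintegral_const_mul' _ _ (by norm_num : (2:ℝ≥0∞) ≠ ⊤),
          lintegral_const_mul' _ _ (by norm_num : (2:ℝ≥0∞) ≠ ⊤), hfst, hsnd]
    _ = 4 * gaussMoment4 * (v : ℝ≥0∞) ^ (2:ℕ) := by ring
    _ = 4 * gaussMoment4 * (ENNReal.ofReal (b - a)) ^ (2:ℕ) := rfl

private lemma hnr' (x : ℝ≥0∞) : x ^ (4:ℝ) = x ^ (4:ℕ) := by
  rw [← ENNReal.rpow_natCast]; norm_num

set_option maxHeartbeats 1000000 in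
/-- There is a constant `C < ∞` such that for every planar Brownian bridge
from `z` to `z` of duration `t > 0`, `E^{t,z,z}[Area(Fill(p([0,t])))²] ≤ C t²`. -/
theorem fill_area_sq_moment :
    ∃ C : ℝ, ∀ (Ω : Type) (_ : MeasurableSpace Ω) (P : Measure Ω),
      IsProbabilityMeasure P → ∀ B : ℝ → Ω → ℂ, IsPlanarBM P B →
      ∀ t : ℝ, 0 < t → ∀ z : ℂ,
        ∫ ω, (volume (Fill (bridgeImg B t z ω))).toReal ^ 2 ∂P ≤ C * t ^ 2 := by
  classical
  -- constants
  set q : ℝ≥0∞ := ENNReal.ofReal 2⁻¹ with hq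
  set ρ : ℝ≥0∞ := q ^ ((4:ℝ)⁻¹) with hρ
  set γ : ℝ≥0∞ := (1 - ρ)⁻¹ with hγ
  have hq1 : q < 1 := by rw [hq]; exact ENNReal.ofReal_lt_one.mpr (by norm_num)
  have hρ1 : ρ < 1 := ENNReal.rpow_lt_one hq1 (by norm_num)
  have hγtop : γ ≠ ⊤ := by
    rw [hγ]
    refine ENNReal.inv_ne_top.mpr ?_
    rw [ne_eq, tsub_eq_zero_iff_le]
    exact not_le.mpr hρ1
  set Etot : ℝ≥0∞ := 64 * ENNReal.ofReal (Real.pi ^ 2) * gaussMoment4 * γ ^ 4 with hEtot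
  have hEtop : Etot ≠ ⊤ := by
    rw [hEtot]
    exact ENNReal.mul_ne_top (ENNReal.mul_ne_top (ENNReal.mul_ne_top (by norm_num)
      ENNReal.ofReal_ne_top) gaussMoment4_ne_top) (ENNReal.pow_ne_top hγtop)
  refine ⟨Etot.toReal, ?_⟩
  intro Ω mΩ P hP B hB t ht z
  have ht' : (0:ℝ) < 2 := by norm_num
  -- dyadic increments
  set inc : ℕ → ℕ → Ω → ℝ≥0∞ := fun n k ω =>
    (‖B (((k:ℝ) + 1) * t / (2:ℝ)^n) ω - B ((k:ℝ) * t / (2:ℝ)^n) ω‖₊ : ℝ≥0∞) with hinc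
  set D : ℕ → Ω → ℝ≥0∞ := fun n ω => ⨆ k : Fin (2^n), inc n (k:ℕ) ω with hD
  set S : Ω → ℝ≥0∞ := fun ω => ∑' n, D n ω with hSdef
  have hDmeas : ∀ n, Measurable (D n) := fun n =>
    Measurable.iSup fun k => ((hB.meas _).sub (hB.meas _)).nnnorm.coe_nnreal_ennreal
  -- increment moment bound
  have hJ : ∀ n, ∫⁻ ω, (D n ω) ^ (4:ℕ) ∂P
      ≤ (4 * gaussMoment4 * (ENNReal.ofReal t) ^ 2) * q ^ n := by
    intro n
    have hptD : ∀ ω, (D n ω) ^ (4:ℕ) ≤ ∑ k : Fin (2^n), (inc n (k:ℕ) ω) ^ (4:ℕ) := by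
      intro ω
      have hne : Nonempty (Fin (2^n)) := ⟨⟨0, by positivity⟩⟩
      obtain ⟨k₀, hk₀⟩ := Finite.exists_max (fun k : Fin (2^n) => inc n (k:ℕ) ω)
      have hDle : D n ω ≤ inc n (k₀:ℕ) ω := by rw [hD]; exact iSup_le hk₀
      calc (D n ω) ^ (4:ℕ) ≤ (inc n (k₀:ℕ) ω) ^ (4:ℕ) := pow_le_pow_left' hDle 4
        _ ≤ ∑ k : Fin (2^n), (inc n (k:ℕ) ω) ^ (4:ℕ) :=
          Finset.single_le_sum (f := fun k : Fin (2^n) => (inc n (k:ℕ) ω) ^ (4:ℕ))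
            (fun i _ => by positivity) (Finset.mem_univ k₀)
    have hsum : ∫⁻ ω, (∑ k : Fin (2^n), (inc n (k:ℕ) ω) ^ (4:ℕ)) ∂P
        = ∑ k : Fin (2^n), ∫⁻ ω, (inc n (k:ℕ) ω) ^ (4:ℕ) ∂P :=
      lintegral_finset_sum _ (fun k _ =>
        (((hB.meas _).sub (hB.meas _)).nnnorm.coe_nnreal_ennreal.pow_const 4))
    have hterm : ∀ k : Fin (2^n), ∫⁻ ω, (inc n (k:ℕ) ω) ^ (4:ℕ) ∂P
        ≤ 4 * gaussMoment4 * (ENNReal.ofReal (t / (2:ℝ)^n)) ^ (2:ℕ) := by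
      intro k
      have ha : (0:ℝ) ≤ (k:ℝ) * t / (2:ℝ)^n := by positivity
      have hab : (k:ℝ) * t / (2:ℝ)^n ≤ ((k:ℝ) + 1) * t / (2:ℝ)^n := by
        have h2n : (0:ℝ) < (2:ℝ)^n := by positivity
        rw [div_le_div_iff₀ h2n h2n]
        nlinarith
      have := lintegral_norm4_increment P B hB ha hab
      have harg : ((k:ℝ) + 1) * t / (2:ℝ)^n - (k:ℝ) * t / (2:ℝ)^n = t / (2:ℝ)^n := by
        field_simp; ring
      rwa [harg] at this
    have hcard : ∑ k : Fin (2^n), (4 * gaussMoment4 * (ENNReal.ofReal (t / (2:ℝ)^n)) ^ (2:ℕ))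
        = (2:ℝ≥0∞) ^ n * (4 * gaussMoment4 * (ENNReal.ofReal (t / (2:ℝ)^n)) ^ (2:ℕ)) := by
      rw [Finset.sum_const, Finset.card_univ, Fintype.card_fin, nsmul_eq_mul]
      congr 1
      rw [Nat.cast_pow, Nat.cast_ofNat]
    have hofr : ENNReal.ofReal (t / (2:ℝ)^n) = ENNReal.ofReal t * q ^ n := by
      have : t / (2:ℝ)^n = t * (2⁻¹)^n := by
        rw [inv_pow, div_eq_mul_inv]
      rw [this, ENNReal.ofReal_mul ht.le, ENNReal.ofReal_pow (by norm_num)]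
    have h2q : (2:ℝ≥0∞) * q ^ 2 = q := by
      rw [hq, ← ENNReal.ofReal_pow (by norm_num), ← ENNReal.ofReal_ofNat 2,
        ← ENNReal.ofReal_mul (by norm_num)]
      norm_num
    calc ∫⁻ ω, (D n ω) ^ (4:ℕ) ∂P
        ≤ ∫⁻ ω, (∑ k : Fin (2^n), (inc n (k:ℕ) ω) ^ (4:ℕ)) ∂P := lintegral_mono hptD
      _ = ∑ k : Fin (2^n), ∫⁻ ω, (inc n (k:ℕ) ω) ^ (4:ℕ) ∂P := hsum
      _ ≤ ∑ k : Fin (2^n), (4 * gaussMoment4 * (ENNReal.ofReal (t / (2:ℝ)^n)) ^ (2:ℕ)) :=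
          Finset.sum_le_sum (fun k _ => hterm k)
      _ = (2:ℝ≥0∞) ^ n * (4 * gaussMoment4 * (ENNReal.ofReal t * q ^ n) ^ (2:ℕ)) := by
          rw [hcard, hofr]
      _ = (4 * gaussMoment4 * (ENNReal.ofReal t) ^ 2) * ((2:ℝ≥0∞) * q ^ 2) ^ n := by
          rw [mul_pow, mul_pow, ← pow_mul, ← pow_mul]
          ring
      _ = (4 * gaussMoment4 * (ENNReal.ofReal t) ^ 2) * q ^ n := by rw [h2q]
  -- Minkowski
  set Kc : ℝ≥0∞ := 4 * gaussMoment4 * (ENNReal.ofReal t) ^ 2 with hKc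
  have e1 : (Kc ^ ((4:ℝ)⁻¹)) ^ (4:ℕ) = Kc := by
    rw [← hnr', ← ENNReal.rpow_mul]; norm_num
  have e2 : ρ ^ (4:ℕ) = q := by
    rw [hρ, ← hnr', ← ENNReal.rpow_mul]; norm_num
  have hbpow : ∀ n : ℕ, (Kc ^ ((4:ℝ)⁻¹) * ρ ^ n) ^ (4:ℕ) = Kc * q ^ n := by
    intro n
    rw [mul_pow, e1, ← pow_mul, mul_comm n 4, pow_mul, e2]
  have hmink : ∫⁻ ω, (S ω) ^ (4:ℕ) ∂P ≤ Kc * γ ^ 4 := by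
    have h := lintegral_tsum_pow4_le P D hDmeas (fun n => Kc ^ ((4:ℝ)⁻¹) * ρ ^ n)
      (fun n => by rw [hbpow n]; exact hJ n)
    have htsum : ∑' n, Kc ^ ((4:ℝ)⁻¹) * ρ ^ n = Kc ^ ((4:ℝ)⁻¹) * γ := by
      rw [ENNReal.tsum_mul_left, ENNReal.tsum_geometric, hγ]
    rw [htsum] at h
    calc ∫⁻ ω, (S ω) ^ (4:ℕ) ∂P ≤ (Kc ^ ((4:ℝ)⁻¹) * γ) ^ (4:ℕ) := h
      _ = Kc * γ ^ 4 := by rw [mul_pow, e1]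
  -- chaining
  have hchain : ∀ ω, ∀ s ∈ Icc (0:ℝ) t, ENNReal.ofReal ‖B s ω‖ ≤ S ω := by
    intro ω s hs
    obtain ⟨hs0, hst⟩ := hs
    set u : ℕ → ℝ := fun n => (⌊s * (2:ℝ)^n / t⌋₊ : ℝ) * t / (2:ℝ)^n with hu
    have hx0 : ∀ n : ℕ, (0:ℝ) ≤ s * (2:ℝ)^n / t := fun n => by positivity
    have hfl : ∀ n : ℕ, (⌊s * (2:ℝ)^n / t⌋₊ : ℝ) ≤ s * (2:ℝ)^n / t :=
      fun n => Nat.floor_le (hx0 n)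
    have hfl2 : ∀ n : ℕ, s * (2:ℝ)^n / t < (⌊s * (2:ℝ)^n / t⌋₊ : ℝ) + 1 :=
      fun n => Nat.lt_floor_add_one _
    have hu_le : ∀ n, u n ≤ s := by
      intro n
      have h2n : (0:ℝ) < (2:ℝ)^n := by positivity
      have h1 : (⌊s * (2:ℝ)^n / t⌋₊ : ℝ) * t ≤ s * (2:ℝ)^n := (le_div_iff₀ ht).mp (hfl n)
      rw [hu]
      exact (div_le_iff₀ h2n).mpr (by linarith)
    have hu_ge : ∀ n, s - t / (2:ℝ)^n ≤ u n := by
      intro n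
      have h2n : (0:ℝ) < (2:ℝ)^n := by positivity
      have h1 : s * (2:ℝ)^n < ((⌊s * (2:ℝ)^n / t⌋₊ : ℝ) + 1) * t := (div_lt_iff₀ ht).mp (hfl2 n)
      rw [hu, sub_le_iff_le_add, ← add_div, le_div_iff₀ h2n]
      nlinarith
    have hu_nonneg : ∀ n, 0 ≤ u n := by
      intro n; rw [hu]; positivity
    -- step 0
    have key0 : ENNReal.ofReal ‖B (u 0) ω‖ ≤ D 0 ω := by
      rcases lt_or_eq_of_le hst with hlt | heq
      · have hfl0 : ⌊s * (2:ℝ)^(0:ℕ) / t⌋₊ = 0 := by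
          refine Nat.floor_eq_zero.mpr ?_
          rw [pow_zero, mul_one]
          exact (div_lt_one ht).mpr hlt
        have : u 0 = 0 := by simp only [hu]; rw [hfl0]; simp
        rw [this, hB.start ω]
        simp
      · have hfl0 : ⌊s * (2:ℝ)^(0:ℕ) / t⌋₊ = 1 := by
          rw [pow_zero, mul_one, heq, div_self (ne_of_gt ht), Nat.floor_one]
        have hu0 : u 0 = t := by simp only [hu]; rw [hfl0]; norm_num
        have hle := le_iSup (fun k : Fin (2^0) => inc 0 (k:ℕ) ω) (⟨0, by norm_num⟩ : Fin (2^0))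
        have hval : inc 0 (0:ℕ) ω = ENNReal.ofReal ‖B (u 0) ω‖ := by
          simp only [hinc, hu0]
          simp only [Nat.cast_zero, zero_add, one_mul, pow_zero, div_one, zero_mul, zero_div]
          rw [hB.start ω, sub_zero, ofReal_norm, enorm_eq_nnnorm]
        simp only [hD]
        rw [← hval]
        exact hle
    -- dyadic step
    have kstep : ∀ n : ℕ, ENNReal.ofReal ‖B (u (n+1)) ω - B (u n) ω‖ ≤ D (n+1) ω := by
      intro n
      set m : ℕ := ⌊s * (2:ℝ)^n / t⌋₊ with hm
      set m' : ℕ := ⌊s * (2:ℝ)^(n+1) / t⌋₊ with hm'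
      have h2x : s * (2:ℝ)^(n+1) / t = 2 * (s * (2:ℝ)^n / t) := by ring
      have hlow : 2 * m ≤ m' := by
        rw [hm']
        refine Nat.le_floor ?_
        rw [h2x]
        push_cast
        nlinarith [hfl n]
      have hhigh : m' < 2 * m + 2 := by
        rw [hm']
        rw [Nat.floor_lt (hx0 (n+1))]
        rw [h2x]
        push_cast
        nlinarith [hfl2 n]
      have hm'0 : m' = 2 * m ∨ m' = 2 * m + 1 := by omega
      have hun : u n = (2 * m : ℝ) * t / (2:ℝ)^(n+1) := by
        simp only [hu]
        rw [← hm, pow_succ]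
        field_simp
      rcases hm'0 with hcase | hcase
      · have : u (n+1) = u n := by
          rw [hun]
          simp only [hu]
          rw [← hm', hcase]
          push_cast
          ring
        rw [this, sub_self]
        simp
      · have hk : 2 * m < 2^(n+1) := by
          have h1 := hfl (n+1)
          rw [← hm', hcase] at h1
          have h2 : s * (2:ℝ)^(n+1) / t ≤ (2:ℝ)^(n+1) := by
            rw [div_le_iff₀ ht]
            nlinarith [pow_pos ht' (n+1)]
          have h3 : ((2 * m + 1 : ℕ) : ℝ) ≤ (2:ℝ)^(n+1) := h1.trans h2
          by_contra hcon
          push_neg at hcon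
          have h5 : ((2:ℕ)^(n+1) : ℝ) ≤ ((2 * m : ℕ) : ℝ) := by exact_mod_cast hcon
          push_cast at h3 h5
          linarith
        have hun1 : u (n+1) = ((2 * m : ℝ) + 1) * t / (2:ℝ)^(n+1) := by
          simp only [hu]
          rw [← hm', hcase]
          push_cast
          ring_nf
        have hle := le_iSup (fun k : Fin (2^(n+1)) => inc (n+1) (k:ℕ) ω)
          (⟨2 * m, hk⟩ : Fin (2^(n+1)))
        have hval : inc (n+1) (2 * m) ω = ENNReal.ofReal ‖B (u (n+1)) ω - B (u n) ω‖ := by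
          simp only [hinc, hun1, hun]
          rw [ofReal_norm, enorm_eq_nnnorm]
          push_cast
          ring_nf
        simp only [hD]
        rw [← hval]
        exact hle
    -- telescoping
    have tele : ∀ N : ℕ, ENNReal.ofReal ‖B (u N) ω‖ ≤ ∑ n ∈ Finset.range (N+1), D n ω := by
      intro N
      induction N with
      | zero => simpa using key0
      | succ N ih =>
          have htri : ‖B (u (N+1)) ω‖ ≤ ‖B (u (N+1)) ω - B (u N) ω‖ + ‖B (u N) ω‖ := by
            have := norm_add_le (B (u (N+1)) ω - B (u N) ω) (B (u N) ω)
            rwa [sub_add_cancel] at this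
          calc ENNReal.ofReal ‖B (u (N+1)) ω‖
              ≤ ENNReal.ofReal (‖B (u (N+1)) ω - B (u N) ω‖ + ‖B (u N) ω‖) :=
                ENNReal.ofReal_le_ofReal htri
            _ ≤ ENNReal.ofReal ‖B (u (N+1)) ω - B (u N) ω‖ + ENNReal.ofReal ‖B (u N) ω‖ :=
                ENNReal.ofReal_add_le
            _ ≤ D (N+1) ω + ∑ n ∈ Finset.range (N+1), D n ω := add_le_add (kstep N) ih
            _ = ∑ n ∈ Finset.range (N+1+1), D n ω := by
                rw [Finset.sum_range_succ (fun n => D n ω) (N+1)]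
                exact add_comm (D (N+1) ω) (∑ n ∈ Finset.range (N+1), D n ω)
    have hbd : ∀ N : ℕ, ENNReal.ofReal ‖B (u N) ω‖ ≤ S ω := by
      intro N
      exact (tele N).trans (ENNReal.sum_le_tsum _)
    -- limit
    have hulim : Tendsto u atTop (nhds s) := by
      have h0 : Tendsto (fun n : ℕ => t * (2⁻¹:ℝ)^n) atTop (nhds 0) := by
        have := tendsto_pow_atTop_nhds_zero_of_lt_one (by norm_num : (0:ℝ) ≤ 2⁻¹)
          (by norm_num : (2⁻¹:ℝ) < 1)
        simpa using tendsto_const_nhds.mul this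
      have hlow : Tendsto (fun n : ℕ => s - t * (2⁻¹:ℝ)^n) atTop (nhds s) := by
        simpa using tendsto_const_nhds.sub h0
      refine tendsto_of_tendsto_of_tendsto_of_le_of_le hlow tendsto_const_nhds ?_ ?_
      · intro n
        have heq : t * (2⁻¹:ℝ)^n = t / (2:ℝ)^n := by
          rw [inv_pow, div_eq_mul_inv]
        show s - t * (2⁻¹:ℝ)^n ≤ u n
        rw [heq]
        exact hu_ge n
      · exact hu_le
    have hBlim : Tendsto (fun N => ENNReal.ofReal ‖B (u N) ω‖) atTop
        (nhds (ENNReal.ofReal ‖B s ω‖)) := by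
      have h1 : Tendsto (fun N => B (u N) ω) atTop (nhds (B s ω)) :=
        ((hB.cont ω).tendsto s).comp hulim
      exact (ENNReal.continuous_ofReal.tendsto _).comp ((continuous_norm.tendsto _).comp h1)
    exact le_of_tendsto hBlim (Filter.Eventually.of_forall hbd)
  -- pointwise area bound
  have hpt : ∀ ω, ENNReal.ofReal ((volume (Fill (bridgeImg B t z ω))).toReal ^ 2)
      ≤ ENNReal.ofReal (Real.pi ^ 2) * 16 * (S ω) ^ (4:ℕ) := by
    intro ω
    have hcont : Continuous fun s => bridgePath B t z ω s := by
      unfold bridgePath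
      exact (continuous_const.add (hB.cont ω)).sub
        ((Complex.continuous_ofReal.comp (continuous_id.div_const t)).mul continuous_const)
    obtain ⟨s₀, hs₀, hmax⟩ := (isCompact_Icc (a := (0:ℝ)) (b := t)).exists_isMaxOn
      ⟨0, ⟨le_refl 0, ht.le⟩⟩
      ((continuous_norm.comp (hcont.sub continuous_const)).continuousOn :
        ContinuousOn (fun s => ‖bridgePath B t z ω s - z‖) (Icc 0 t))
    set r : ℝ := ‖bridgePath B t z ω s₀ - z‖ with hr
    have hr0 : 0 ≤ r := norm_nonneg _
    have himg : bridgeImg B t z ω ⊆ Metric.closedBall z r := by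
      rintro _ ⟨s, hs, rfl⟩
      rw [Metric.mem_closedBall, Complex.dist_eq]
      exact hmax hs
    have hAr : volume (Fill (bridgeImg B t z ω)) ≤ ENNReal.ofReal r ^ 2 * NNReal.pi := by
      rw [← Complex.volume_closedBall z r]
      exact measure_mono (Fill_subset_closedBall hr0 himg)
    have hAreal : (volume (Fill (bridgeImg B t z ω))).toReal ≤ r ^ 2 * Real.pi := by
      have h1 := ENNReal.toReal_mono
        (ENNReal.mul_ne_top (ENNReal.pow_ne_top ENNReal.ofReal_ne_top) ENNReal.coe_ne_top) hAr
      rwa [ENNReal.toReal_mul, ENNReal.toReal_pow, ENNReal.toReal_ofReal hr0,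
        ENNReal.coe_toReal, NNReal.coe_real_pi] at h1
    have hsq : (volume (Fill (bridgeImg B t z ω))).toReal ^ 2 ≤ Real.pi ^ 2 * r ^ 4 := by
      calc (volume (Fill (bridgeImg B t z ω))).toReal ^ 2
          ≤ (r ^ 2 * Real.pi) ^ 2 := by
            exact pow_le_pow_left₀ ENNReal.toReal_nonneg hAreal 2
        _ = Real.pi ^ 2 * r ^ 4 := by ring
    have hofr : ENNReal.ofReal r ≤ 2 * S ω := by
      have hsplit : bridgePath B t z ω s₀ - z = B s₀ ω - ((s₀ / t : ℝ) : ℂ) * B t ω := by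
        unfold bridgePath; ring
      have hr_le : r ≤ ‖B s₀ ω‖ + ‖B t ω‖ := by
        rw [hr, hsplit]
        refine (norm_sub_le _ _).trans ?_
        have : ‖((s₀ / t : ℝ) : ℂ) * B t ω‖ ≤ ‖B t ω‖ := by
          rw [norm_mul, Complex.norm_real, Real.norm_eq_abs,
            abs_of_nonneg (div_nonneg hs₀.1 ht.le)]
          have hle1 : s₀ / t ≤ 1 := (div_le_one ht).mpr hs₀.2
          nlinarith [norm_nonneg (B t ω)]
        linarith
      calc ENNReal.ofReal r ≤ ENNReal.ofReal (‖B s₀ ω‖ + ‖B t ω‖) :=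
            ENNReal.ofReal_le_ofReal hr_le
        _ ≤ ENNReal.ofReal ‖B s₀ ω‖ + ENNReal.ofReal ‖B t ω‖ := ENNReal.ofReal_add_le
        _ ≤ S ω + S ω := add_le_add (hchain ω s₀ hs₀) (hchain ω t ⟨ht.le, le_refl t⟩)
        _ = 2 * S ω := (two_mul _).symm
    calc ENNReal.ofReal ((volume (Fill (bridgeImg B t z ω))).toReal ^ 2)
        ≤ ENNReal.ofReal (Real.pi ^ 2 * r ^ 4) := ENNReal.ofReal_le_ofReal hsq
      _ = ENNReal.ofReal (Real.pi ^ 2) * (ENNReal.ofReal r) ^ 4 := by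
          rw [ENNReal.ofReal_mul (by positivity), ENNReal.ofReal_pow hr0]
      _ ≤ ENNReal.ofReal (Real.pi ^ 2) * (2 * S ω) ^ 4 := by
          exact mul_le_mul_right (pow_le_pow_left' hofr 4) _
      _ = ENNReal.ofReal (Real.pi ^ 2) * 16 * (S ω) ^ (4:ℕ) := by
          rw [mul_pow]
          norm_num
          ring
  -- final integral bound
  have hSmeas : Measurable S := Measurable.ennreal_tsum hDmeas
  have hlin : ∫⁻ ω, ENNReal.ofReal ((volume (Fill (bridgeImg B t z ω))).toReal ^ 2) ∂P
      ≤ Etot * ENNReal.ofReal (t ^ 2) := by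
    calc ∫⁻ ω, ENNReal.ofReal ((volume (Fill (bridgeImg B t z ω))).toReal ^ 2) ∂P
        ≤ ∫⁻ ω, ENNReal.ofReal (Real.pi ^ 2) * 16 * (S ω) ^ (4:ℕ) ∂P := lintegral_mono hpt
      _ = ENNReal.ofReal (Real.pi ^ 2) * 16 * ∫⁻ ω, (S ω) ^ (4:ℕ) ∂P :=
          lintegral_const_mul' _ _ (by finiteness)
      _ ≤ ENNReal.ofReal (Real.pi ^ 2) * 16 * (Kc * γ ^ 4) := mul_le_mul_right hmink _
      _ = Etot * ENNReal.ofReal (t ^ 2) := by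
          rw [hEtot, hKc, ENNReal.ofReal_pow ht.le]
          ring
  have hfinal : ∫ ω, (volume (Fill (bridgeImg B t z ω))).toReal ^ 2 ∂P
      ≤ (Etot * ENNReal.ofReal (t ^ 2)).toReal := by
    by_cases hInt : Integrable (fun ω => (volume (Fill (bridgeImg B t z ω))).toReal ^ 2) P
    · rw [integral_eq_lintegral_of_nonneg_ae
        (Filter.Eventually.of_forall (fun ω => sq_nonneg _)) hInt.aestronglyMeasurable]
      exact ENNReal.toReal_mono (ENNReal.mul_ne_top hEtop ENNReal.ofReal_ne_top) hlin
    · rw [integral_undef hInt]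
      exact ENNReal.toReal_nonneg
  calc ∫ ω, (volume (Fill (bridgeImg B t z ω))).toReal ^ 2 ∂P
      ≤ (Etot * ENNReal.ofReal (t ^ 2)).toReal := hfinal
    _ = Etot.toReal * t ^ 2 := by
        rw [ENNReal.toReal_mul, ENNReal.toReal_ofReal (sq_nonneg t)]
end
end

section
/- Let z₀ ∈ ℂ, r > 0, and let f be holomorphic on the open ball B(z₀, r) with Im f(z) ≥ 0 for all z ∈ B(z₀, r). Then |f'(z₀)| ≤ 2√2 · Im f(z₀) / r. (Equivalently, each partial derivative of the nonnegative harmonic function v = Im f at z₀ is bounded in absolute value by 2 v(z₀)/r.) -/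
open Metric Complex

/-- Auxiliary version with strictly positive imaginary part. -/
lemma deriv_bound_of_pos_im (z₀ : ℂ) (r : ℝ) (hr : 0 < r) (f : ℂ → ℂ)
    (hf : DifferentiableOn ℂ f (Metric.ball z₀ r))
    (him : ∀ z ∈ Metric.ball z₀ r, 0 < (f z).im) :
    ‖deriv f z₀‖ ≤ 2 * Real.sqrt 2 * (f z₀).im / r := by
  have hz₀ : z₀ ∈ Metric.ball z₀ r := Metric.mem_ball_self hr
  set p := f z₀ with hp
  have hv : 0 < p.im := him z₀ hz₀
  set h : ℂ → ℂ := fun z => (f z - p) / (f z - (starRingEnd ℂ) p) with hh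
  have hden : ∀ z ∈ Metric.ball z₀ r, f z - (starRingEnd ℂ) p ≠ 0 := by
    intro z hz hzero
    have : (f z - (starRingEnd ℂ) p).im = (f z).im + p.im := by
      simp [Complex.sub_im, Complex.conj_im]
    rw [hzero] at this
    simp only [Complex.zero_im] at this
    have := him z hz
    linarith
  have hd : DifferentiableOn ℂ h (Metric.ball z₀ r) :=
    ((hf.sub (differentiableOn_const p)).div
      (hf.sub (differentiableOn_const _)) hden)
  have hh0 : h z₀ = 0 := by simp [hh, hp]
  have hnorm : ∀ z ∈ Metric.ball z₀ r, ‖h z‖ ≤ 1 := by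
    intro z hz
    have hd0 := hden z hz
    rw [hh]
    rw [norm_div, div_le_one (norm_pos_iff.mpr hd0)]
    have h1 : Complex.normSq (f z - p) ≤ Complex.normSq (f z - (starRingEnd ℂ) p) := by
      have hi := (him z hz).le
      simp only [Complex.normSq_apply, Complex.sub_re, Complex.sub_im, Complex.conj_re,
        Complex.conj_im]
      nlinarith [hi, hv.le]
    have := Real.sqrt_le_sqrt h1
    simpa [Complex.norm_def] using this
  have hmaps : Set.MapsTo h (Metric.ball z₀ r) (Metric.ball (h z₀) (Real.sqrt 2)) := by
    intro z hz
    rw [hh0, Metric.mem_ball, dist_zero_right]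
    calc ‖h z‖ ≤ 1 := hnorm z hz
      _ < Real.sqrt 2 := by
        rw [show (1:ℝ) = Real.sqrt 1 by simp]
        exact Real.sqrt_lt_sqrt (by norm_num) (by norm_num)
  have hschwarz : ‖deriv h z₀‖ ≤ Real.sqrt 2 / r :=
    Complex.norm_deriv_le_div_of_mapsTo_ball hd (hmaps.mono_right Metric.ball_subset_closedBall) hr
  -- compute deriv h z₀
  have hfa : DifferentiableAt ℂ f z₀ := hf.differentiableAt (Metric.isOpen_ball.mem_nhds hz₀)
  have hfd : HasDerivAt f (deriv f z₀) z₀ := hfa.hasDerivAt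
  have hdh : HasDerivAt h (deriv f z₀ / (p - (starRingEnd ℂ) p)) z₀ := by
    have h1 : HasDerivAt (fun z => f z - p) (deriv f z₀) z₀ := hfd.sub_const p
    have h2 : HasDerivAt (fun z => f z - (starRingEnd ℂ) p) (deriv f z₀) z₀ :=
      hfd.sub_const _
    have := h1.div h2 (hden z₀ hz₀)
    have hne : p - (starRingEnd ℂ) p ≠ 0 := by
      have := hden z₀ hz₀; rwa [← hp] at this
    refine this.congr_deriv ?_
    symm
    rw [← hp, sub_self, zero_mul, sub_zero, sq]
    rw [div_eq_div_iff hne (mul_ne_zero hne hne)]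
    ring
  have hderiv : deriv h z₀ = deriv f z₀ / (p - (starRingEnd ℂ) p) := hdh.deriv
  have hpp : p - (starRingEnd ℂ) p = (2 * p.im : ℝ) * Complex.I := by
    apply Complex.ext <;> simp [Complex.sub_im, Complex.sub_re, Complex.conj_re,
      Complex.conj_im] <;> ring
  have hnp : ‖p - (starRingEnd ℂ) p‖ = 2 * p.im := by
    rw [hpp]
    simp [abs_of_pos hv]
  have : ‖deriv f z₀‖ / (2 * p.im) ≤ Real.sqrt 2 / r := by
    rw [← hnp]
    calc ‖deriv f z₀‖ / ‖p - (starRingEnd ℂ) p‖ = ‖deriv h z₀‖ := by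
          rw [hderiv, norm_div]
      _ ≤ Real.sqrt 2 / r := hschwarz
  rw [div_le_div_iff₀ (by positivity) hr] at this
  rw [le_div_iff₀ hr]
  nlinarith [Real.sq_sqrt (by norm_num : (2:ℝ) ≥ 0), Real.sqrt_nonneg 2]

/-- If `f` is holomorphic on the open disk `B(z₀, r)` with `Im f ≥ 0`
there, then `|f'(z₀)| ≤ 2√2 · Im f(z₀) / r`. -/
theorem deriv_bound_of_nonneg_im (z₀ : ℂ) (r : ℝ) (hr : 0 < r) (f : ℂ → ℂ)
    (hf : DifferentiableOn ℂ f (Metric.ball z₀ r))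
    (him : ∀ z ∈ Metric.ball z₀ r, 0 ≤ (f z).im) :
    ‖deriv f z₀‖ ≤ 2 * Real.sqrt 2 * (f z₀).im / r := by
  apply le_of_forall_pos_le_add
  intro δ hδ
  set ε : ℝ := δ * r / (2 * Real.sqrt 2) with hε
  have hs2 : (0:ℝ) < Real.sqrt 2 := Real.sqrt_pos.mpr (by norm_num)
  have hεpos : 0 < ε := by positivity
  set g : ℂ → ℂ := fun z => f z + (ε : ℂ) * Complex.I with hg
  have hgd : DifferentiableOn ℂ g (Metric.ball z₀ r) :=
    hf.add (differentiableOn_const _)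
  have hgim : ∀ z ∈ Metric.ball z₀ r, 0 < (g z).im := by
    intro z hz
    have := him z hz
    simp only [hg, Complex.add_im, Complex.mul_im, Complex.ofReal_re, Complex.ofReal_im,
      Complex.I_re, Complex.I_im]
    simp only [mul_one, mul_zero, zero_mul, add_zero]
    linarith
  have key := deriv_bound_of_pos_im z₀ r hr g hgd hgim
  have hderiv : deriv g z₀ = deriv f z₀ := by
    simp only [hg]
    rw [deriv_add_const]
  have hgz : (g z₀).im = (f z₀).im + ε := by
    simp [hg]
  rw [hderiv, hgz] at key
  calc ‖deriv f z₀‖ ≤ 2 * Real.sqrt 2 * ((f z₀).im + ε) / r := key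
    _ = 2 * Real.sqrt 2 * (f z₀).im / r + 2 * Real.sqrt 2 * ε / r := by ring
    _ = 2 * Real.sqrt 2 * (f z₀).im / r + δ := by
        rw [hε]; field_simp
end

section
/- Let h > 0, let a ∈ ℝ and let b ∈ (0, πh). Then ∫_{−∞}^{∞} (1/(2πh)) · sin(b/h) / ( cosh((a − s)/h) − cos(b/h) ) ds = 1 − b/(πh). (This says that the Poisson kernel of the horizontal strip ℝ + i(0, πh), rooted at a point x with Re x = a and Im x = b, integrates over the bottom boundary ℝ to 1 − Im x/(πh).) -/
open MeasureTheory

open Filter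

/-- For `h > 0`, `a ∈ ℝ` and `b ∈ (0, πh)`,
`∫_ℝ (1/(2πh)) sin(b/h) / (cosh((a-s)/h) - cos(b/h)) ds = 1 - b/(πh)`:
the Poisson kernel of the strip `ℝ + i(0, πh)` at the interior point `a + ib` integrates
over the bottom boundary to `1 - b/(πh)`. -/
theorem strip_poisson_kernel_integral (h a b : ℝ) (hh : 0 < h) (hb : 0 < b)
    (hbh : b < Real.pi * h) :
    ∫ s : ℝ, (1 / (2 * Real.pi * h)) * Real.sin (b / h) /
        (Real.cosh ((a - s) / h) - Real.cos (b / h)) =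
      1 - b / (Real.pi * h) := by
  have hπ := Real.pi_pos
  set γ : ℝ := b / (2 * h) with hγdef
  have hγ0 : 0 < γ := by positivity
  have hγ2 : γ < Real.pi / 2 := by
    rw [hγdef, div_lt_iff₀ (by linarith)]
    linarith
  have hsγ : 0 < Real.sin γ := Real.sin_pos_of_pos_of_lt_pi hγ0 (by linarith)
  have hcγ : 0 < Real.cos γ := Real.cos_pos_of_mem_Ioo ⟨by linarith, hγ2⟩
  -- rewrite half angles
  have hbh2 : b / h = 2 * γ := by rw [hγdef]; field_simp
  have hsin2 : Real.sin (b / h) = 2 * Real.sin γ * Real.cos γ := by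
    rw [hbh2, Real.sin_two_mul]
  have hcos2 : Real.cos (b / h) = 1 - 2 * Real.sin γ ^ 2 := by
    rw [hbh2, Real.cos_two_mul, Real.cos_sq']; ring
  have hhalf : ∀ s : ℝ, (a - s) / h = 2 * ((a - s) / (2 * h)) := by
    intro s; field_simp
  have hcosh2 : ∀ s : ℝ, Real.cosh ((a - s) / h)
      = 2 * Real.sinh ((a - s) / (2 * h)) ^ 2 + 1 := by
    intro s
    rw [hhalf s, Real.cosh_two_mul, Real.cosh_sq]; ring
  -- the integrand
  set g : ℝ → ℝ := fun s => (1 / (2 * Real.pi * h)) * Real.sin (b / h) /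
      (Real.cosh ((a - s) / h) - Real.cos (b / h)) with hgdef
  -- positivity of the denominator
  have hpos : ∀ s : ℝ, 0 < Real.cosh ((a - s) / h) - Real.cos (b / h) := by
    intro s
    rw [hcosh2 s, hcos2]
    nlinarith [sq_nonneg (Real.sinh ((a - s) / (2 * h)))]
  have hg0 : ∀ s : ℝ, 0 ≤ g s := by
    intro s
    rw [hgdef]
    have := hpos s
    have : (0:ℝ) < Real.sin (b/h) := by rw [hsin2]; positivity
    positivity
  have hgcont : Continuous g := by
    rw [hgdef]
    exact continuous_const.div
      ((Real.continuous_cosh.comp (by continuity)).sub continuous_const)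
      (fun s => ne_of_gt (hpos s))
  -- the antiderivative
  set G : ℝ → ℝ := fun s =>
      -(1 / Real.pi) * Real.arctan
        (Real.sinh ((a - s) / (2 * h)) / Real.cosh ((a - s) / (2 * h))
          * (Real.cos γ / Real.sin γ)) with hGdef
  have hder : ∀ s : ℝ, HasDerivAt G (g s) s := by
    intro s
    have hθ : HasDerivAt (fun s : ℝ => (a - s) / (2 * h)) (-1 / (2 * h)) s := by
      simpa using ((hasDerivAt_id s).const_sub a).div_const (2 * h)
    have hsinh := (Real.hasDerivAt_sinh ((a - s) / (2 * h))).comp s hθ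
    have hcosh := (Real.hasDerivAt_cosh ((a - s) / (2 * h))).comp s hθ
    have hcoshne : Real.cosh ((a - s) / (2 * h)) ≠ 0 :=
      ne_of_gt (Real.cosh_pos _)
    have hv := (hsinh.div hcosh hcoshne).mul_const (Real.cos γ / Real.sin γ)
    have harctan := (Real.hasDerivAt_arctan _).comp s hv
    have hfinal := harctan.const_mul (-(1 / Real.pi))
    convert hfinal using 1
    show (1 / (2 * Real.pi * h)) * Real.sin (b / h) /
        (Real.cosh ((a - s) / h) - Real.cos (b / h)) = _
    simp only [Function.comp, Pi.div_apply]
    rw [hsin2, hcosh2 s, hcos2]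
    set x := Real.sinh ((a - s) / (2 * h)) with hx
    set y := Real.cosh ((a - s) / (2 * h)) with hyy
    have hy2 : y ^ 2 = x ^ 2 + 1 := Real.cosh_sq _
    have hy0 : 0 < y := Real.cosh_pos _
    have hc2 : Real.cos γ ^ 2 = 1 - Real.sin γ ^ 2 := Real.cos_sq' γ
    have hd : (0:ℝ) < x ^ 2 + Real.sin γ ^ 2 := by positivity
    have hnum : y ^ 2 * Real.sin γ ^ 2 + x ^ 2 * Real.cos γ ^ 2
        = x ^ 2 + Real.sin γ ^ 2 := by rw [hy2, hc2]; ring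
    have h1 : 1 + (x / y * (Real.cos γ / Real.sin γ)) ^ 2
        = (x ^ 2 + Real.sin γ ^ 2) / (y ^ 2 * Real.sin γ ^ 2) := by
      rw [← hnum]; field_simp
    have hyx : y * (-1 / (2 * h)) * y - x * (x * (-1 / (2 * h))) = -1 / (2 * h) := by
      linear_combination (-1 / (2 * h)) * hy2
    rw [h1, hyx, show 2 * x ^ 2 + 1 - (1 - 2 * Real.sin γ ^ 2)
        = 2 * (x ^ 2 + Real.sin γ ^ 2) by ring]
    field_simp
    all_goals rfl
  -- limits of G
  have htanh_top : Tendsto (fun x : ℝ => Real.sinh x / Real.cosh x) atTop (nhds 1) := by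
    have heq : ∀ x : ℝ, Real.sinh x / Real.cosh x
        = (1 - Real.exp (-(2 * x))) / (1 + Real.exp (-(2 * x))) := by
      intro x
      rw [Real.sinh_eq, Real.cosh_eq]
      have he : Real.exp x ≠ 0 := (Real.exp_pos x).ne'
      have h2 : Real.exp (-(2 * x)) = Real.exp (-x) / Real.exp x := by
        rw [← Real.exp_sub]; ring_nf
      rw [h2]
      field_simp
    have h2x : Tendsto (fun x : ℝ => -(2 * x)) atTop atBot := by
      have h1 : Tendsto (fun x : ℝ => 2 * x) atTop atTop :=
        (tendsto_const_mul_atTop_of_pos (by norm_num : (0:ℝ) < 2)).mpr tendsto_id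
      exact tendsto_neg_atTop_atBot.comp h1
    have hexp : Tendsto (fun x : ℝ => Real.exp (-(2 * x))) atTop (nhds 0) :=
      Real.tendsto_exp_atBot.comp h2x
    simp only [heq]
    have hA : Tendsto (fun x : ℝ => 1 - Real.exp (-(2 * x))) atTop (nhds (1 - 0)) :=
      tendsto_const_nhds.sub hexp
    have hB : Tendsto (fun x : ℝ => 1 + Real.exp (-(2 * x))) atTop (nhds (1 + 0)) :=
      tendsto_const_nhds.add hexp
    have := hA.div hB (by norm_num)
    simpa [Pi.div_def] using this
  have htanh_bot : Tendsto (fun x : ℝ => Real.sinh x / Real.cosh x) atBot (nhds (-1)) := by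
    have hcomp := (htanh_top.comp tendsto_neg_atBot_atTop).neg
    simp only [Function.comp_def, Real.sinh_neg, Real.cosh_neg] at hcomp
    simpa [neg_div, neg_neg] using hcomp
  have hθtop : Tendsto (fun s : ℝ => (a - s) / (2 * h)) atTop atBot := by
    apply Tendsto.atBot_div_const (by linarith)
    exact tendsto_atBot_add_const_left _ a tendsto_neg_atTop_atBot
  have hθbot : Tendsto (fun s : ℝ => (a - s) / (2 * h)) atBot atTop := by
    apply Tendsto.atTop_div_const (by linarith)
    exact tendsto_atTop_add_const_left _ a tendsto_neg_atBot_atTop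
  have harc : Real.arctan (Real.cos γ / Real.sin γ) = Real.pi / 2 - γ := by
    have ht : Real.cos γ / Real.sin γ = (Real.tan γ)⁻¹ := by
      rw [Real.tan_eq_sin_div_cos, inv_div]
    rw [ht, Real.arctan_inv_of_pos (Real.tan_pos_of_pos_of_lt_pi_div_two hγ0 hγ2),
      Real.arctan_tan (by linarith) hγ2]
  set n : ℝ := (1 / Real.pi) * (Real.pi / 2 - γ) with hndef
  have htop : Tendsto G atTop (nhds n) := by
    have hv : Tendsto (fun s : ℝ => Real.sinh ((a - s) / (2 * h)) / Real.cosh ((a - s) / (2 * h))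
        * (Real.cos γ / Real.sin γ)) atTop (nhds (-1 * (Real.cos γ / Real.sin γ))) :=
      (htanh_bot.comp hθtop).mul_const _
    have := ((Real.continuous_arctan.tendsto _).comp hv).const_mul (-(1 / Real.pi))
    rw [hGdef]
    convert this using 2
    · rfl
    rw [hndef]
    rw [show (-1 : ℝ) * (Real.cos γ / Real.sin γ) = -(Real.cos γ / Real.sin γ) by ring,
      Real.arctan_neg, harc]
    ring
  have hbot : Tendsto G atBot (nhds (-n)) := by
    have hv : Tendsto (fun s : ℝ => Real.sinh ((a - s) / (2 * h)) / Real.cosh ((a - s) / (2 * h))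
        * (Real.cos γ / Real.sin γ)) atBot (nhds (1 * (Real.cos γ / Real.sin γ))) :=
      (htanh_top.comp hθbot).mul_const _
    have := ((Real.continuous_arctan.tendsto _).comp hv).const_mul (-(1 / Real.pi))
    rw [hGdef]
    convert this using 2
    · rfl
    rw [hndef, one_mul, harc]
    ring
  -- monotonicity of G
  have hmono : Monotone G :=
    monotone_of_deriv_nonneg (fun s => (hder s).differentiableAt)
      (fun s => by rw [(hder s).deriv]; exact hg0 s)
  -- integrability of g
  have hint : Integrable g := by
    apply integrable_of_intervalIntegral_norm_bounded (n - (-n))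
      (f := g) (μ := volume) (l := atTop) (a := fun i : ℝ => -i) (b := fun i : ℝ => i)
      (fun i => hgcont.integrableOn_Ioc) tendsto_neg_atTop_atBot tendsto_id
    filter_upwards [eventually_ge_atTop (0:ℝ)] with i hi
    have hnorm : ∫ x in (-i)..i, ‖g x‖ = ∫ x in (-i)..i, g x := by
      apply intervalIntegral.integral_congr
      intro t _
      exact Real.norm_of_nonneg (hg0 t)
    rw [hnorm, intervalIntegral.integral_eq_sub_of_hasDerivAt (fun t _ => hder t)
      (hgcont.intervalIntegrable _ _)]
    have h1 : G i ≤ n := hmono.ge_of_tendsto htop i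
    have h2 : -n ≤ G (-i) := hmono.le_of_tendsto hbot (-i)
    linarith
  rw [show (∫ s : ℝ, (1 / (2 * Real.pi * h)) * Real.sin (b / h) /
        (Real.cosh ((a - s) / h) - Real.cos (b / h))) = ∫ s : ℝ, g s from rfl,
    integral_of_hasDerivAt_of_tendsto hder hint hbot htop, hndef, hγdef]
  field_simp
  ring
end
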